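/- Let L be any n×n complex matrix with anti-Hermitian part Lᵃ = (L − L*)/2, let Γ be a density matrix on ℂⁿ, let γ be the orthogonal projection onto the first basis vector, and set α = tr((I−γ)Γ). Then |tr(γ·[Γ, Lᵃ])| ≤ 2‖L‖√α, where [Γ, Lᵃ] = ΓLᵃ − LᵃΓ. -/

import Mathlib

open Matrix ComplexOrder

/-- The operator norm of a matrix induced by the Euclidean norm on `ℂⁿ`. -/
noncomputable def euclideanOpNorm {n : ℕ} (L : Matrix (Fin n) (Fin n) ℂ) : ℝ :=
  ‖Matrix.toEuclideanCLM (𝕜 := ℂ) L‖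

private lemma quad_expand {m : ℕ} (Γ : Matrix (Fin m) (Fin m) ℂ) (i k : Fin m) (a b : ℂ) :
    star (a • (Pi.single i 1 : Fin m → ℂ) + b • (Pi.single k 1 : Fin m → ℂ)) ⬝ᵥ
      (Γ *ᵥ (a • (Pi.single i 1 : Fin m → ℂ) + b • (Pi.single k 1 : Fin m → ℂ))) =
      (starRingEnd ℂ a) * a * Γ i i + (starRingEnd ℂ a) * b * Γ i k
        + (starRingEnd ℂ b) * a * Γ k i + (starRingEnd ℂ b) * b * Γ k k := by
  simp only [star_add, star_smul, Matrix.mulVec_add, Matrix.mulVec_smul,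
    Matrix.mulVec_single, mul_one, dotProduct_add, add_dotProduct, dotProduct_smul,
    smul_dotProduct, smul_eq_mul, star_smul]
  simp only [dotProduct, Pi.star_apply, Pi.smul_apply, Pi.single_apply, smul_eq_mul]
  simp [apply_ite, mul_ite, RCLike.star_def, Finset.mul_sum]
  ring

private lemma map_conjAux (z : ℂ) : ‖starRingEnd ℂ z‖ ^ 2 = Complex.normSq z := by
  rw [Complex.norm_conj, Complex.sq_norm]

private lemma colsum_le {m : ℕ} (L La : Matrix (Fin m) (Fin m) ℂ)
    (hLa : La = ((1 : ℂ) / 2) • (L - Lᴴ)) (j : Fin m) :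
    ∑ k, ‖La k j‖ ^ 2 ≤ euclideanOpNorm L ^ 2 := by
  have hB2 : ∑ k, ‖La k j‖ ^ 2
      = ‖(Matrix.toEuclideanCLM (𝕜 := ℂ) La)
          ((WithLp.equiv 2 (Fin m → ℂ)).symm (Pi.single j 1))‖ ^ 2 := by
    rw [WithLp.equiv_symm_apply, Matrix.toEuclideanCLM_toLp, EuclideanSpace.norm_eq,
      Real.sq_sqrt (by positivity)]
    refine Finset.sum_congr rfl fun k _ => ?_
    simp [Matrix.toLin'_apply, Matrix.mulVec_single]
  have hB4 : ‖Matrix.toEuclideanCLM (𝕜 := ℂ) La‖ ≤ euclideanOpNorm L := by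
    have he : Matrix.toEuclideanCLM (𝕜 := ℂ) La
        = ((1:ℂ)/2) • (Matrix.toEuclideanCLM (𝕜 := ℂ) L
          - star (Matrix.toEuclideanCLM (𝕜 := ℂ) L)) := by
      rw [hLa, _root_.map_smul, map_sub, ← Matrix.star_eq_conjTranspose, map_star]
    rw [he]
    have hsm := norm_smul_le ((1:ℂ)/2)
      (Matrix.toEuclideanCLM (𝕜 := ℂ) L - star (Matrix.toEuclideanCLM (𝕜 := ℂ) L))
    have h12 : ‖(1:ℂ)/2‖ = 1/2 := by norm_num
    rw [h12] at hsm
    have h2 := norm_sub_le (Matrix.toEuclideanCLM (𝕜 := ℂ) L)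
      (star (Matrix.toEuclideanCLM (𝕜 := ℂ) L))
    have h3 : ‖star (Matrix.toEuclideanCLM (𝕜 := ℂ) L)‖
        = ‖Matrix.toEuclideanCLM (𝕜 := ℂ) L‖ := by
      rw [ContinuousLinearMap.star_eq_adjoint]
      exact LinearIsometryEquiv.norm_map ContinuousLinearMap.adjoint _
    rw [euclideanOpNorm]
    linarith
  have hx0n : ‖((WithLp.equiv 2 (Fin m → ℂ)).symm (Pi.single j 1)
      : EuclideanSpace ℂ (Fin m))‖ = 1 := by
    have he0 : ((WithLp.equiv 2 (Fin m → ℂ)).symm (Pi.single j 1)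
        : EuclideanSpace ℂ (Fin m)) = EuclideanSpace.single j (1:ℂ) := rfl
    rw [he0, EuclideanSpace.norm_single]; norm_num
  have hB3 := (Matrix.toEuclideanCLM (𝕜 := ℂ) La).le_opNorm
    ((WithLp.equiv 2 (Fin m → ℂ)).symm (Pi.single j 1))
  rw [hx0n, mul_one] at hB3
  have hB5 := hB3.trans hB4
  rw [hB2]
  have h0 := norm_nonneg ((Matrix.toEuclideanCLM (𝕜 := ℂ) La)
    ((WithLp.equiv 2 (Fin m → ℂ)).symm (Pi.single j 1)))
  nlinarith [hB5]

private lemma trace_std_mul {m : ℕ} [NeZero m] (M : Matrix (Fin m) (Fin m) ℂ) :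
    (Matrix.single (0 : Fin m) 0 (1:ℂ) * M).trace = M 0 0 := by
  simp [Matrix.trace, Matrix.diag, Matrix.mul_apply, Matrix.single, ite_and]

set_option maxHeartbeats 1000000 in
set_option synthInstance.maxHeartbeats 400000 in
theorem commutator_antihermitian_bound {n : ℕ} (L Γ : Matrix (Fin (n + 1)) (Fin (n + 1)) ℂ)
    (hΓ : Γ.PosSemidef) (hΓtr : Γ.trace = 1)
    (La : Matrix (Fin (n + 1)) (Fin (n + 1)) ℂ) (hLa : La = ((1 : ℂ) / 2) • (L - Lᴴ))
    (α : ℝ)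
    (hα : α = ((1 - Matrix.single (0 : Fin (n + 1)) 0 (1 : ℂ)) * Γ).trace.re) :
    ‖(Matrix.single (0 : Fin (n + 1)) 0 (1 : ℂ) *
        (Γ * La - La * Γ)).trace‖
      ≤ 2 * euclideanOpNorm L * Real.sqrt α := by
  set N := euclideanOpNorm L with hN
  have hN0 : 0 ≤ N := norm_nonneg _
  -- hermitian entries
  have herm : ∀ i j, starRingEnd ℂ (Γ i j) = Γ j i := by
    intro i j
    have := congrFun (congrFun hΓ.1 j) i
    simpa [Matrix.conjTranspose_apply, RCLike.star_def] using this
  -- diagonal facts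
  have hdiag : ∀ k, 0 ≤ (Γ k k).re ∧ (Γ k k).im = 0 := by
    intro k
    have h := hΓ.dotProduct_mulVec_nonneg (Pi.single k 1)
    have e : star (Pi.single k 1 : Fin (n+1) → ℂ) ⬝ᵥ (Γ *ᵥ Pi.single k 1) = Γ k k := by
      simp [Matrix.mulVec_single, dotProduct, Pi.single_apply, apply_ite]
    rw [e, Complex.le_def] at h
    exact ⟨by simpa using h.1, by simpa using h.2.symm⟩
  have hdiagC : ∀ k, Γ k k = ((Γ k k).re : ℂ) := by
    intro k
    exact Complex.ext rfl (by simp [(hdiag k).2])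
  set g : ℝ := (Γ 0 0).re with hg
  -- trace facts
  have hsum : ∑ k, (Γ k k).re = 1 := by
    have : (Γ.trace).re = 1 := by rw [hΓtr]; simp
    simpa [Matrix.trace, Matrix.diag, Complex.re_sum] using this
  have hsplit : g + ∑ k ∈ Finset.univ.erase 0, (Γ k k).re = 1 := by
    have h2 := Finset.add_sum_erase Finset.univ (fun k => (Γ k k).re)
      (Finset.mem_univ (0 : Fin (n+1)))
    rw [hsum] at h2
    exact h2
  have hg1 : g ≤ 1 := by
    have : 0 ≤ ∑ k ∈ Finset.univ.erase 0, (Γ k k).re :=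
      Finset.sum_nonneg fun k _ => (hdiag k).1
    linarith
  have hα' : α = ∑ k ∈ Finset.univ.erase 0, (Γ k k).re := by
    have h1 : ((1 - Matrix.single (0 : Fin (n + 1)) 0 (1 : ℂ)) * Γ).trace
        = 1 - Γ 0 0 := by
      rw [Matrix.sub_mul, Matrix.one_mul, Matrix.trace_sub, trace_std_mul, hΓtr]
    rw [hα, h1]
    have : (1 - Γ 0 0 : ℂ).re = 1 - g := by simp [hg]
    rw [this]; linarith
  have hα0 : 0 ≤ α := by
    rw [hα']; exact Finset.sum_nonneg fun k _ => (hdiag k).1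
  -- entry bound
  have hentry : ∀ k ∈ Finset.univ.erase (0 : Fin (n+1)),
      ‖Γ 0 k‖ ^ 2 ≤ (Γ k k).re := by
    intro k _
    set z := Γ k 0 with hz
    set s : ℝ := Complex.normSq z with hs
    set d : ℝ := (Γ k k).re with hd
    have h0k : Γ 0 k = starRingEnd ℂ z := (herm k 0).symm
    have habs : ‖Γ 0 k‖ ^ 2 = s := by
      rw [h0k, map_conjAux]
    have hgC : Γ 0 0 = (g : ℂ) := hdiagC 0
    have hdC : Γ k k = (d : ℂ) := hdiagC k
    have hzz : z * starRingEnd ℂ z = (s : ℂ) := Complex.mul_conj z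
    have hq := hΓ.dotProduct_mulVec_nonneg ((s:ℂ) • (Pi.single 0 1 : Fin (n+1) → ℂ)
      + (-z) • (Pi.single k 1 : Fin (n+1) → ℂ))
    rw [quad_expand] at hq
    have hval : (starRingEnd ℂ (s:ℂ)) * (s:ℂ) * Γ 0 0 + (starRingEnd ℂ (s:ℂ)) * (-z) * Γ 0 k
        + (starRingEnd ℂ (-z)) * (s:ℂ) * Γ k 0 + (starRingEnd ℂ (-z)) * (-z) * Γ k k
        = ((s^2*g - 2*(s*s) + s*d : ℝ) : ℂ) := by
      rw [h0k, hgC, hdC, Complex.conj_ofReal, map_neg, ← hz]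
      push_cast
      linear_combination ((d:ℂ) - 2*(s:ℂ)) * hzz
    rw [hval, Complex.le_def] at hq
    have hq' : 0 ≤ s^2*g - 2*(s*s) + s*d := by
      have := hq.1
      simp only [Complex.ofReal_re, Complex.zero_re] at this
      exact this
    have hs0 : 0 ≤ s := Complex.normSq_nonneg z
    have key : s * s ≤ s * d := by nlinarith [sq_nonneg s]
    have hsd : s ≤ d := by
      rcases eq_or_lt_of_le hs0 with h|h
      · rw [← h]; exact (hdiag k).1
      · exact le_of_mul_le_mul_left key h
    rw [habs]; exact hsd
  -- antihermitian facts
  have hLaH : Laᴴ = -La := by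
    rw [hLa]
    ext i j
    simp [Matrix.conjTranspose_apply, Matrix.smul_apply, Matrix.sub_apply, map_sub,
      mul_comm]
    ring
  have hLaE : ∀ i j, starRingEnd ℂ (La i j) = -La j i := by
    intro i j
    have := congrFun (congrFun hLaH j) i
    simpa [Matrix.conjTranspose_apply, RCLike.star_def] using this
  -- trace value
  set w : ℂ := (Γ * La) 0 0 with hw
  have hT : (Matrix.single (0 : Fin (n + 1)) 0 (1 : ℂ) *
      (Γ * La - La * Γ)).trace = ((2 * w.re : ℝ) : ℂ) := by
    rw [trace_std_mul]
    have hc : starRingEnd ℂ w = -((La * Γ) 0 0) := by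
      rw [hw]
      simp only [Matrix.mul_apply, map_sum, _root_.map_mul, herm, hLaE]
      rw [← Finset.sum_neg_distrib]
      exact Finset.sum_congr rfl fun k _ => by ring
    have : (Γ * La - La * Γ) 0 0 = w + starRingEnd ℂ w := by
      rw [hc]; simp [hw, Matrix.sub_apply, sub_eq_add_neg]
    rw [this, Complex.add_conj]
  rw [hT]
  have habs : ‖((2 * w.re : ℝ) : ℂ)‖ = 2 * |w.re| := by
    rw [Complex.norm_real, Real.norm_eq_abs, abs_mul]; norm_num
  rw [habs]
  -- bound |w.re|
  set P : ℝ := ∑ k ∈ Finset.univ.erase (0:Fin (n+1)),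
      ‖Γ 0 k‖ * ‖La k 0‖ with hP
  have hP0 : 0 ≤ P :=
    Finset.sum_nonneg fun k _ => mul_nonneg (norm_nonneg _) (norm_nonneg _)
  have hwP : |w.re| ≤ P := by
    have hw' : w = ∑ k, Γ 0 k * La k 0 := by rw [hw, Matrix.mul_apply]
    have hLre : (La 0 0).re = 0 := by
      have h2 := congrArg Complex.re (hLaE 0 0)
      simp only [Complex.conj_re, Complex.neg_re] at h2
      linarith
    have hterm0 : (Γ 0 0 * La 0 0).re = 0 := by
      rw [hdiagC 0, Complex.re_ofReal_mul, hLre, mul_zero]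
    have hsplitw : w.re = (∑ k ∈ Finset.univ.erase 0, Γ 0 k * La k 0).re := by
      rw [hw', ← Finset.add_sum_erase Finset.univ _ (Finset.mem_univ (0 : Fin (n+1)))]
      rw [Complex.add_re, hterm0, zero_add]
    calc |w.re| ≤ ‖∑ k ∈ Finset.univ.erase 0, Γ 0 k * La k 0‖ := by
          rw [hsplitw]; exact Complex.abs_re_le_norm _
      _ ≤ ∑ k ∈ Finset.univ.erase 0, ‖Γ 0 k * La k 0‖ :=
          norm_sum_le _ _
      _ = P := Finset.sum_congr rfl fun k _ => norm_mul _ _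
  -- Cauchy-Schwarz
  have hCS : P ^ 2 ≤ α * N ^ 2 := by
    have cs := Finset.sum_mul_sq_le_sq_mul_sq (Finset.univ.erase (0 : Fin (n+1)))
      (fun k => ‖Γ 0 k‖) (fun k => ‖La k 0‖)
    have hA : ∑ k ∈ Finset.univ.erase (0 : Fin (n+1)), ‖Γ 0 k‖ ^ 2 ≤ α := by
      rw [hα']; exact Finset.sum_le_sum hentry
    have hB : ∑ k ∈ Finset.univ.erase (0 : Fin (n+1)), ‖La k 0‖ ^ 2 ≤ N ^ 2 := by
      have hB1 : ∑ k ∈ Finset.univ.erase (0 : Fin (n+1)), ‖La k 0‖ ^ 2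
          ≤ ∑ k, ‖La k 0‖ ^ 2 :=
        Finset.sum_le_sum_of_subset_of_nonneg (Finset.subset_univ _)
          (fun k _ _ => sq_nonneg _)
      have hB2 := colsum_le L La hLa 0
      rw [hN]
      exact hB1.trans hB2
    calc P ^ 2 ≤ (∑ k ∈ Finset.univ.erase (0 : Fin (n+1)), ‖Γ 0 k‖ ^ 2)
          * ∑ k ∈ Finset.univ.erase (0 : Fin (n+1)), ‖La k 0‖ ^ 2 := cs
      _ ≤ α * N ^ 2 := by
          have h1 : 0 ≤ ∑ k ∈ Finset.univ.erase (0 : Fin (n+1)), ‖La k 0‖ ^ 2 :=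
            Finset.sum_nonneg fun k _ => sq_nonneg _
          have h2 : 0 ≤ ∑ k ∈ Finset.univ.erase (0 : Fin (n+1)), ‖Γ 0 k‖ ^ 2 :=
            Finset.sum_nonneg fun k _ => sq_nonneg _
          exact mul_le_mul hA hB h1 hα0
  -- conclude
  have hPb : P ≤ N * Real.sqrt α := by
    have h1 : P = Real.sqrt (P ^ 2) := (Real.sqrt_sq hP0).symm
    rw [h1]
    calc Real.sqrt (P ^ 2) ≤ Real.sqrt (α * N ^ 2) := Real.sqrt_le_sqrt hCS
      _ = Real.sqrt α * N := by
          rw [Real.sqrt_mul hα0, Real.sqrt_sq hN0]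
      _ = N * Real.sqrt α := mul_comm _ _
  calc 2 * |w.re| ≤ 2 * P := by linarith
    _ ≤ 2 * (N * Real.sqrt α) := by linarith
    _ = 2 * N * Real.sqrt α := by ring
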